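/- arXiv:1310.3878 — 3 statements merged into one kernel-verified Lean document; each statement's English description precedes it below -/
import Mathlib

section
/- Fix a field K and a nonzero q ∈ K with q + 1 ≠ 0 (e.g. K = ℂ(q) with q the variable). Let R be the K-algebra presented by generators T_0, T_1, …, T_{n−1} with relations T_0² = (q−2)·T_0 + (q−1); T_i² = (q−1)·T_i + q for 1 ≤ i ≤ n−1; T_iT_{i+1}T_i = T_{i+1}T_iT_{i+1} for 1 ≤ i ≤ n−2; T_0T_1T_0T_1 = (q−1)(T_1T_0T_1 + T_1T_0) − T_0T_1T_0; T_1T_0T_1T_0 = (q−1)(T_1T_0T_1 + T_0T_1) − T_0T_1T_0; T_iT_j = T_jT_i for |i−j| ≥ 2. Let S be the K-algebra presented by generators e, T_1, …, T_{n−1} with relations T_i² = (q−1)·T_i + q for 1 ≤ i ≤ n−1; T_iT_{i+1}T_i = T_{i+1}T_iT_{i+1} for 1 ≤ i ≤ n−2; T_iT_j = T_jT_i for |i−j| ≥ 2; e² = e; eT_i = T_ie for i ≥ 2; eT_1eT_1 = T_1eT_1e; eT_1eT_1 = T_1eT_1 − eT_1e + T_1e + eT_1 + e − T_1 − 1. Then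 there is a K-algebra isomorphism R ≅ S sending T_0 ↦ q·e − 1 and T_i ↦ T_i for 1 ≤ i ≤ n−1, with inverse sending e ↦ q⁻¹(T_0 + 1). -/
set_option maxHeartbeats 1600000
set_option synthInstance.maxHeartbeats 1000000

noncomputable section

section CompLemmas
variable {K : Type} [Field K] (q : K) {A : Type} [Ring A] [Algebra K A]

lemma myL0 (e : A) (he : e*e = e) :
    (q•e-1)*(q•e-1) = (q-2)•(q•e-1)+(q-1)•(1:A) := by
  simp only [mul_sub, sub_mul, mul_add, add_mul, smul_mul_assoc, mul_smul_comm, smul_smul,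
    smul_add, smul_sub, mul_one, one_mul, mul_assoc, he]
  module

lemma myLc (e t : A) (h : e*t = t*e) : (q•e-1)*t = t*(q•e-1) := by
  simp only [mul_sub, sub_mul, smul_mul_assoc, mul_smul_comm, mul_one, one_mul, h]

lemma myL4 (e t : A) (ht2 : t*t = (q-1)•t + q•(1:A))
    (h7 : e*t*e*t = t*e*t - e*t*e + t*e + e*t + e - t - 1) :
    (q•e-1)*t*(q•e-1)*t = (q-1)•(t*(q•e-1)*t + t*(q•e-1)) - (q•e-1)*t*(q•e-1) := by
  have h7' : e*(t*(e*t)) = t*(e*t) - e*(t*e) + t*e + e*t + e - t - 1 := by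
    simpa [mul_assoc] using h7
  simp only [mul_sub, sub_mul, mul_add, add_mul, smul_mul_assoc, mul_smul_comm, smul_smul,
    smul_add, smul_sub, mul_one, one_mul, mul_assoc, ht2, h7']
  module

lemma myL5 (e t : A) (ht2 : t*t = (q-1)•t + q•(1:A))
    (h6 : t*e*t*e = t*e*t - e*t*e + t*e + e*t + e - t - 1) :
    t*(q•e-1)*t*(q•e-1) = (q-1)•(t*(q•e-1)*t + (q•e-1)*t) - (q•e-1)*t*(q•e-1) := by
  have h6' : t*(e*(t*e)) = t*(e*t) - e*(t*e) + t*e + e*t + e - t - 1 := by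
    simpa [mul_assoc] using h6
  have ht2e : t*(t*e) = (q-1)•(t*e) + q•e := by
    rw [← mul_assoc, ht2]; simp [add_mul, smul_mul_assoc]
  simp only [mul_sub, sub_mul, mul_add, add_mul, smul_mul_assoc, mul_smul_comm, smul_smul,
    smul_add, smul_sub, mul_one, one_mul, mul_assoc, ht2, ht2e, h6']
  module

lemma myR1 (hq : q ≠ 0) (a : A) (ha : a*a = (q-2)•a + (q-1)•(1:A)) :
    (q⁻¹•(a+1))*(q⁻¹•(a+1)) = q⁻¹•(a+1) := by
  simp only [mul_sub, sub_mul, mul_add, add_mul, smul_mul_assoc, mul_smul_comm, smul_smul,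
    smul_add, smul_sub, mul_one, one_mul, mul_assoc, ha]
  match_scalars <;>
    (try simp only [← mul_pow, mul_inv_cancel₀ hq, inv_mul_cancel₀ hq, one_pow, one_mul,
      mul_one]) <;> try ring

lemma myRc (a t : A) (h : a*t = t*a) : (q⁻¹•(a+1))*t = t*(q⁻¹•(a+1)) := by
  simp only [add_mul, mul_add, smul_mul_assoc, mul_smul_comm, mul_one, one_mul, h]

lemma myR6 (a t : A) (ht2 : t*t = (q-1)•t + q•(1:A))
    (h4 : a*t*a*t = (q-1)•(t*a*t + t*a) - a*t*a)
    (h5 : t*a*t*a = (q-1)•(t*a*t + a*t) - a*t*a) :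
    (q⁻¹•(a+1))*t*(q⁻¹•(a+1))*t = t*(q⁻¹•(a+1))*t*(q⁻¹•(a+1)) := by
  have h4' : a*(t*(a*t)) = (q-1)•(t*(a*t) + t*a) - a*(t*a) := by simpa [mul_assoc] using h4
  have h5' : t*(a*(t*a)) = (q-1)•(t*(a*t) + a*t) - a*(t*a) := by simpa [mul_assoc] using h5
  have ht2a : t*(t*a) = (q-1)•(t*a) + q•a := by
    rw [← mul_assoc, ht2]; simp [add_mul, smul_mul_assoc]
  simp only [mul_sub, sub_mul, mul_add, add_mul, smul_mul_assoc, mul_smul_comm, smul_smul,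
    smul_add, smul_sub, mul_one, one_mul, mul_assoc, ht2, ht2a, h4', h5']
  module

lemma myR7 (hq : q ≠ 0) (a t : A) (ht2 : t*t = (q-1)•t + q•(1:A))
    (h4 : a*t*a*t = (q-1)•(t*a*t + t*a) - a*t*a) :
    (q⁻¹•(a+1))*t*(q⁻¹•(a+1))*t = t*(q⁻¹•(a+1))*t - (q⁻¹•(a+1))*t*(q⁻¹•(a+1)) +
      t*(q⁻¹•(a+1)) + (q⁻¹•(a+1))*t + (q⁻¹•(a+1)) - t - 1 := by
  have h4' : a*(t*(a*t)) = (q-1)•(t*(a*t) + t*a) - a*(t*a) := by simpa [mul_assoc] using h4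
  simp only [mul_sub, sub_mul, mul_add, add_mul, smul_mul_assoc, mul_smul_comm, smul_smul,
    smul_add, smul_sub, mul_one, one_mul, mul_assoc, ht2, h4']
  match_scalars <;>
    (try simp only [← mul_pow, mul_inv_cancel₀ hq, inv_mul_cancel₀ hq, one_pow, one_mul,
      mul_one]) <;> try ring

end CompLemmas



/-- The relations of Solomon's presentation of the mirabolic Hecke algebra `R_n(K,q)`,
on generators `T_0, T_1, …, T_{n-1}` (indexed by `Fin n`). -/
inductive SolomonRel (K : Type) [Field K] (q : K) (n : ℕ) :
    FreeAlgebra K (Fin n) → FreeAlgebra K (Fin n) → Prop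
  | quad0 (i : Fin n) (hi : i.val = 0) :
      SolomonRel K q n (FreeAlgebra.ι K i * FreeAlgebra.ι K i)
        ((q - 2) • FreeAlgebra.ι K i + (q - 1) • (1 : FreeAlgebra K (Fin n)))
  | quad (i : Fin n) (hi : 1 ≤ i.val) :
      SolomonRel K q n (FreeAlgebra.ι K i * FreeAlgebra.ι K i)
        ((q - 1) • FreeAlgebra.ι K i + q • (1 : FreeAlgebra K (Fin n)))
  | braid (i j : Fin n) (hi : 1 ≤ i.val) (hij : i.val + 1 = j.val) :
      SolomonRel K q n (FreeAlgebra.ι K i * FreeAlgebra.ι K j * FreeAlgebra.ι K i)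
        (FreeAlgebra.ι K j * FreeAlgebra.ι K i * FreeAlgebra.ι K j)
  | rel4 (i j : Fin n) (hi : i.val = 0) (hj : j.val = 1) :
      SolomonRel K q n
        (FreeAlgebra.ι K i * FreeAlgebra.ι K j * FreeAlgebra.ι K i * FreeAlgebra.ι K j)
        ((q - 1) • (FreeAlgebra.ι K j * FreeAlgebra.ι K i * FreeAlgebra.ι K j +
            FreeAlgebra.ι K j * FreeAlgebra.ι K i) -
          FreeAlgebra.ι K i * FreeAlgebra.ι K j * FreeAlgebra.ι K i)
  | rel5 (i j : Fin n) (hi : i.val = 0) (hj : j.val = 1) :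
      SolomonRel K q n
        (FreeAlgebra.ι K j * FreeAlgebra.ι K i * FreeAlgebra.ι K j * FreeAlgebra.ι K i)
        ((q - 1) • (FreeAlgebra.ι K j * FreeAlgebra.ι K i * FreeAlgebra.ι K j +
            FreeAlgebra.ι K i * FreeAlgebra.ι K j) -
          FreeAlgebra.ι K i * FreeAlgebra.ι K j * FreeAlgebra.ι K i)
  | comm (i j : Fin n) (hij : i.val + 2 ≤ j.val ∨ j.val + 2 ≤ i.val) :
      SolomonRel K q n (FreeAlgebra.ι K i * FreeAlgebra.ι K j)
        (FreeAlgebra.ι K j * FreeAlgebra.ι K i)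

/-- The mirabolic Hecke algebra `R_n(K,q)`, presented by Solomon's relations. -/
abbrev MirabolicHecke (K : Type) [Field K] (q : K) (n : ℕ) : Type :=
  RingQuot (SolomonRel K q n)

/-- The generator `T_i` of the mirabolic Hecke algebra. -/
def MirabolicHecke.T {K : Type} [Field K] {q : K} {n : ℕ} (i : Fin n) :
    MirabolicHecke K q n :=
  RingQuot.mkAlgHom K (SolomonRel K q n) (FreeAlgebra.ι K i)

/-- The relations of the new presentation of the mirabolic Hecke algebra on generators
`e, T_1, …, T_{n-1}`, indexed by `Fin n` with `0 ↦ e` and `i ↦ T_i` for `1 ≤ i ≤ n-1`. -/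
inductive MirNewRel (K : Type) [Field K] (q : K) (n : ℕ) :
    FreeAlgebra K (Fin n) → FreeAlgebra K (Fin n) → Prop
  | quad (i : Fin n) (hi : 1 ≤ i.val) :
      MirNewRel K q n (FreeAlgebra.ι K i * FreeAlgebra.ι K i)
        ((q - 1) • FreeAlgebra.ι K i + q • (1 : FreeAlgebra K (Fin n)))
  | braid (i j : Fin n) (hi : 1 ≤ i.val) (hij : i.val + 1 = j.val) :
      MirNewRel K q n (FreeAlgebra.ι K i * FreeAlgebra.ι K j * FreeAlgebra.ι K i)
        (FreeAlgebra.ι K j * FreeAlgebra.ι K i * FreeAlgebra.ι K j)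
  | comm (i j : Fin n) (hi : 1 ≤ i.val) (hj : 1 ≤ j.val)
      (hij : i.val + 2 ≤ j.val ∨ j.val + 2 ≤ i.val) :
      MirNewRel K q n (FreeAlgebra.ι K i * FreeAlgebra.ι K j)
        (FreeAlgebra.ι K j * FreeAlgebra.ι K i)
  | idem (x : Fin n) (hx : x.val = 0) :
      MirNewRel K q n (FreeAlgebra.ι K x * FreeAlgebra.ι K x) (FreeAlgebra.ι K x)
  | ecomm (x i : Fin n) (hx : x.val = 0) (hi : 2 ≤ i.val) :
      MirNewRel K q n (FreeAlgebra.ι K x * FreeAlgebra.ι K i)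
        (FreeAlgebra.ι K i * FreeAlgebra.ι K x)
  | erel6 (x t : Fin n) (hx : x.val = 0) (ht : t.val = 1) :
      MirNewRel K q n
        (FreeAlgebra.ι K x * FreeAlgebra.ι K t * FreeAlgebra.ι K x * FreeAlgebra.ι K t)
        (FreeAlgebra.ι K t * FreeAlgebra.ι K x * FreeAlgebra.ι K t * FreeAlgebra.ι K x)
  | erel7 (x t : Fin n) (hx : x.val = 0) (ht : t.val = 1) :
      MirNewRel K q n
        (FreeAlgebra.ι K x * FreeAlgebra.ι K t * FreeAlgebra.ι K x * FreeAlgebra.ι K t)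
        (FreeAlgebra.ι K t * FreeAlgebra.ι K x * FreeAlgebra.ι K t -
            FreeAlgebra.ι K x * FreeAlgebra.ι K t * FreeAlgebra.ι K x +
            FreeAlgebra.ι K t * FreeAlgebra.ι K x + FreeAlgebra.ι K x * FreeAlgebra.ι K t +
            FreeAlgebra.ι K x - FreeAlgebra.ι K t - 1)

/-- The algebra with new presentation on generators `e, T_1, …, T_{n-1}`. -/
abbrev MirNew (K : Type) [Field K] (q : K) (n : ℕ) : Type := RingQuot (MirNewRel K q n)

/-- The generators of `MirNew`: `gen 0 = e`, `gen i = T_i` for `i ≥ 1`. -/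
def MirNew.gen {K : Type} [Field K] {q : K} {n : ℕ} (i : Fin n) : MirNew K q n :=
  RingQuot.mkAlgHom K (MirNewRel K q n) (FreeAlgebra.ι K i)

-- ==== auxiliary constructions ====

section Construction
variable {K : Type} [Field K] {q : K} {n : ℕ}

/-- image of generators of the Solomon presentation in `MirNew`. -/
private def fwdGen (i : Fin n) : MirNew K q n :=
  if i.val = 0 then q • MirNew.gen i - 1 else MirNew.gen i

/-- image of generators of the new presentation in `MirabolicHecke`. -/
private def bwdGen (i : Fin n) : MirabolicHecke K q n :=
  if i.val = 0 then q⁻¹ • (MirabolicHecke.T i + 1) else MirabolicHecke.T i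

private lemma mn_rel {x y : FreeAlgebra K (Fin n)} (h : MirNewRel K q n x y) :
    RingQuot.mkAlgHom K (MirNewRel K q n) x = RingQuot.mkAlgHom K (MirNewRel K q n) y :=
  RingQuot.mkAlgHom_rel K h

private lemma mh_rel {x y : FreeAlgebra K (Fin n)} (h : SolomonRel K q n x y) :
    RingQuot.mkAlgHom K (SolomonRel K q n) x = RingQuot.mkAlgHom K (SolomonRel K q n) y :=
  RingQuot.mkAlgHom_rel K h

private lemma fwd_resp {K : Type} [Field K] {q : K} {n : ℕ} :
    ∀ ⦃x y : FreeAlgebra K (Fin n)⦄, SolomonRel K q n x y →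
    (FreeAlgebra.lift K (fwdGen (q := q))) x = (FreeAlgebra.lift K (fwdGen (q := q))) y := by
  intro x y h
  induction h with
  | quad0 i hi =>
      have h1 := mn_rel (q := q) (MirNewRel.idem i hi)
      simp only [map_mul] at h1
      simp only [map_mul, map_add, map_smul, map_one, FreeAlgebra.lift_ι_apply, fwdGen, hi,
        reduceIte, MirNew.gen]
      exact myL0 q _ h1
  | quad i hi =>
      have h0 : ¬ i.val = 0 := by omega
      have h1 := mn_rel (q := q) (MirNewRel.quad i hi)
      simp only [map_mul, map_add, map_smul, map_one] at h1
      simp only [map_mul, map_add, map_smul, map_one, FreeAlgebra.lift_ι_apply, fwdGen, h0,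
        reduceIte, MirNew.gen]
      exact h1
  | braid i j hi hij =>
      have h0 : ¬ i.val = 0 := by omega
      have h0' : ¬ j.val = 0 := by omega
      have h1 := mn_rel (q := q) (MirNewRel.braid i j hi hij)
      simp only [map_mul] at h1
      simp only [map_mul, FreeAlgebra.lift_ι_apply, fwdGen, h0, h0', reduceIte, MirNew.gen]
      exact h1
  | rel4 i j hi hj =>
      have h0' : ¬ j.val = 0 := by omega
      have h2 := mn_rel (q := q) (MirNewRel.quad j (show 1 ≤ j.val by omega))
      have h7 := mn_rel (q := q) (MirNewRel.erel7 i j hi hj)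
      simp only [map_mul, map_add, map_smul, map_one, map_sub] at h2 h7
      simp only [map_mul, map_add, map_sub, map_smul, FreeAlgebra.lift_ι_apply, fwdGen, hi,
        h0', reduceIte, MirNew.gen]
      exact myL4 q _ _ h2 h7
  | rel5 i j hi hj =>
      have h0' : ¬ j.val = 0 := by omega
      have h2 := mn_rel (q := q) (MirNewRel.quad j (show 1 ≤ j.val by omega))
      have h6 := mn_rel (q := q) (MirNewRel.erel6 i j hi hj)
      have h7 := mn_rel (q := q) (MirNewRel.erel7 i j hi hj)
      simp only [map_mul, map_add, map_smul, map_one, map_sub] at h2 h6 h7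
      simp only [map_mul, map_add, map_sub, map_smul, FreeAlgebra.lift_ι_apply, fwdGen, hi,
        h0', reduceIte, MirNew.gen]
      exact myL5 q _ _ h2 (h6.symm.trans h7)
  | comm i j hij =>
      rcases Nat.eq_zero_or_pos i.val with hi0 | hi0
      · have hj2 : 2 ≤ j.val := by omega
        have h0' : ¬ j.val = 0 := by omega
        have h1 := mn_rel (q := q) (MirNewRel.ecomm i j hi0 hj2)
        simp only [map_mul] at h1
        simp only [map_mul, FreeAlgebra.lift_ι_apply, fwdGen, hi0, h0', reduceIte, MirNew.gen]
        exact myLc q _ _ h1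
      · rcases Nat.eq_zero_or_pos j.val with hj0 | hj0
        · have hi2 : 2 ≤ i.val := by omega
          have h0 : ¬ i.val = 0 := by omega
          have h1 := mn_rel (q := q) (MirNewRel.ecomm j i hj0 hi2)
          simp only [map_mul] at h1
          simp only [map_mul, FreeAlgebra.lift_ι_apply, fwdGen, hj0, h0, reduceIte, MirNew.gen]
          exact (myLc q _ _ h1).symm
        · have h0 : ¬ i.val = 0 := by omega
          have h0' : ¬ j.val = 0 := by omega
          have h1 := mn_rel (q := q) (MirNewRel.comm i j hi0 hj0 hij)
          simp only [map_mul] at h1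
          simp only [map_mul, FreeAlgebra.lift_ι_apply, fwdGen, h0, h0', reduceIte, MirNew.gen]
          exact h1

private lemma bwd_resp {K : Type} [Field K] {q : K} {n : ℕ} (hq : q ≠ 0) :
    ∀ ⦃x y : FreeAlgebra K (Fin n)⦄, MirNewRel K q n x y →
    (FreeAlgebra.lift K (bwdGen (q := q))) x = (FreeAlgebra.lift K (bwdGen (q := q))) y := by
  intro x y h
  induction h with
  | quad i hi =>
      have h0 : ¬ i.val = 0 := by omega
      have h1 := mh_rel (q := q) (SolomonRel.quad i hi)
      simp only [map_mul, map_add, map_smul, map_one] at h1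
      simp only [map_mul, map_add, map_smul, map_one, FreeAlgebra.lift_ι_apply, bwdGen, h0,
        reduceIte, MirabolicHecke.T]
      exact h1
  | braid i j hi hij =>
      have h0 : ¬ i.val = 0 := by omega
      have h0' : ¬ j.val = 0 := by omega
      have h1 := mh_rel (q := q) (SolomonRel.braid i j hi hij)
      simp only [map_mul] at h1
      simp only [map_mul, FreeAlgebra.lift_ι_apply, bwdGen, h0, h0', reduceIte,
        MirabolicHecke.T]
      exact h1
  | comm i j hi hj hij =>
      have h0 : ¬ i.val = 0 := by omega
      have h0' : ¬ j.val = 0 := by omega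
      have h1 := mh_rel (q := q) (SolomonRel.comm i j hij)
      simp only [map_mul] at h1
      simp only [map_mul, FreeAlgebra.lift_ι_apply, bwdGen, h0, h0', reduceIte,
        MirabolicHecke.T]
      exact h1
  | idem x hx =>
      have h1 := mh_rel (q := q) (SolomonRel.quad0 x hx)
      simp only [map_mul, map_add, map_smul, map_one] at h1
      simp only [map_mul, FreeAlgebra.lift_ι_apply, bwdGen, hx, reduceIte, MirabolicHecke.T]
      exact myR1 q hq _ h1
  | ecomm x i hx hi =>
      have h0' : ¬ i.val = 0 := by omega
      have h1 := mh_rel (q := q) (SolomonRel.comm x i (Or.inl (by omega)))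
      simp only [map_mul] at h1
      simp only [map_mul, FreeAlgebra.lift_ι_apply, bwdGen, hx, h0', reduceIte,
        MirabolicHecke.T]
      exact myRc q _ _ h1
  | erel6 x t hx ht =>
      have h0' : ¬ t.val = 0 := by omega
      have h2 := mh_rel (q := q) (SolomonRel.quad t (show 1 ≤ t.val by omega))
      have h4 := mh_rel (q := q) (SolomonRel.rel4 x t hx ht)
      have h5 := mh_rel (q := q) (SolomonRel.rel5 x t hx ht)
      simp only [map_mul, map_add, map_smul, map_one, map_sub] at h2 h4 h5
      simp only [map_mul, FreeAlgebra.lift_ι_apply, bwdGen, hx, h0', reduceIte,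
        MirabolicHecke.T]
      exact myR6 q _ _ h2 h4 h5
  | erel7 x t hx ht =>
      have h0' : ¬ t.val = 0 := by omega
      have h2 := mh_rel (q := q) (SolomonRel.quad t (show 1 ≤ t.val by omega))
      have h4 := mh_rel (q := q) (SolomonRel.rel4 x t hx ht)
      simp only [map_mul, map_add, map_smul, map_one, map_sub] at h2 h4
      simp only [map_mul, map_add, map_sub, map_one, FreeAlgebra.lift_ι_apply, bwdGen, hx, h0',
        reduceIte, MirabolicHecke.T]
      exact myR7 q hq _ _ h2 h4

end Construction

/-- There is a `K`-algebra isomorphism between the two presentations of the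
mirabolic Hecke algebra, sending `T_0 ↦ q·e − 1` and `T_i ↦ T_i` for `1 ≤ i ≤ n−1`, with
inverse sending `e ↦ q⁻¹(T_0 + 1)`. -/
theorem mirabolicHecke_iso_newPresentation (K : Type) [Field K] (q : K) (hq : q ≠ 0)
    (hq1 : q + 1 ≠ 0) (n : ℕ) (hn : 0 < n) :
    ∃ φ : MirabolicHecke K q n ≃ₐ[K] MirNew K q n,
      φ (MirabolicHecke.T ⟨0, hn⟩) = q • MirNew.gen ⟨0, hn⟩ - 1 ∧
      (∀ i : Fin n, 1 ≤ i.val → φ (MirabolicHecke.T i) = MirNew.gen i) ∧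
      φ.symm (MirNew.gen ⟨0, hn⟩) = q⁻¹ • (MirabolicHecke.T ⟨0, hn⟩ + 1) := by
  let f : MirabolicHecke K q n →ₐ[K] MirNew K q n :=
    RingQuot.liftAlgHom K ⟨FreeAlgebra.lift K (fwdGen (q := q)), fwd_resp⟩
  let g : MirNew K q n →ₐ[K] MirabolicHecke K q n :=
    RingQuot.liftAlgHom K ⟨FreeAlgebra.lift K (bwdGen (q := q)), bwd_resp hq⟩
  have hfT : ∀ i : Fin n, f (MirabolicHecke.T i) = fwdGen (q := q) i := by
    intro i
    simp [f, MirabolicHecke.T, RingQuot.liftAlgHom_mkAlgHom_apply, FreeAlgebra.lift_ι_apply]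
  have hgE : ∀ i : Fin n, g (MirNew.gen i) = bwdGen (q := q) i := by
    intro i
    simp [g, MirNew.gen, RingQuot.liftAlgHom_mkAlgHom_apply, FreeAlgebra.lift_ι_apply]
  have hgf : g.comp f = AlgHom.id K (MirabolicHecke K q n) := by
    apply RingQuot.ringQuot_ext'
    apply FreeAlgebra.hom_ext
    funext i
    rcases Nat.eq_zero_or_pos i.val with hi0 | hi0
    · simp only [AlgHom.comp_apply, AlgHom.coe_comp, Function.comp_apply, AlgHom.id_comp,
        RingQuot.liftAlgHom_mkAlgHom_apply, FreeAlgebra.lift_ι_apply]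
      show g (f (MirabolicHecke.T i)) = MirabolicHecke.T i
      rw [hfT, fwdGen, if_pos hi0, map_sub, map_smul, map_one, hgE, bwdGen, if_pos hi0,
        smul_smul, mul_inv_cancel₀ hq, one_smul]
      abel
    · have h0 : ¬ i.val = 0 := by omega
      simp only [AlgHom.comp_apply, AlgHom.coe_comp, Function.comp_apply, AlgHom.id_comp,
        RingQuot.liftAlgHom_mkAlgHom_apply, FreeAlgebra.lift_ι_apply]
      show g (f (MirabolicHecke.T i)) = MirabolicHecke.T i
      rw [hfT, fwdGen, if_neg h0, hgE, bwdGen, if_neg h0]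
  have hfg : f.comp g = AlgHom.id K (MirNew K q n) := by
    apply RingQuot.ringQuot_ext'
    apply FreeAlgebra.hom_ext
    funext i
    rcases Nat.eq_zero_or_pos i.val with hi0 | hi0
    · simp only [AlgHom.comp_apply, AlgHom.coe_comp, Function.comp_apply, AlgHom.id_comp,
        RingQuot.liftAlgHom_mkAlgHom_apply, FreeAlgebra.lift_ι_apply]
      show f (g (MirNew.gen i)) = MirNew.gen i
      rw [hgE, bwdGen, if_pos hi0, map_smul, map_add, map_one, hfT, fwdGen, if_pos hi0]
      rw [sub_add_cancel, smul_smul, inv_mul_cancel₀ hq, one_smul]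
    · have h0 : ¬ i.val = 0 := by omega
      simp only [AlgHom.comp_apply, AlgHom.coe_comp, Function.comp_apply, AlgHom.id_comp,
        RingQuot.liftAlgHom_mkAlgHom_apply, FreeAlgebra.lift_ι_apply]
      show f (g (MirNew.gen i)) = MirNew.gen i
      rw [hgE, bwdGen, if_neg h0, hfT, fwdGen, if_neg h0]
  refine ⟨AlgEquiv.ofAlgHom f g hfg hgf, ?_, ?_, ?_⟩
  · show f (MirabolicHecke.T ⟨0, hn⟩) = _
    rw [hfT, fwdGen, if_pos rfl]
  · intro i hi
    show f (MirabolicHecke.T i) = _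
    rw [hfT, fwdGen, if_neg (by omega)]
  · show g (MirNew.gen ⟨0, hn⟩) = _
    rw [hgE, bwdGen, if_pos rfl]
end
end

section
/- In the generic mirabolic Hecke algebra ℛ_n over ℂ(q), for every symmetric polynomial p ∈ ℂ(q)[x_1, …, x_n] (i.e. p invariant under all permutations of the variables), the element p(L_1, …, L_n) obtained by evaluating p at the Jucys–Murphy elements lies in the center of ℛ_n. -/
noncomputable section

section JM

local notation "K" => RatFunc ℂ
local notation "q" => (RatFunc.X : RatFunc ℂ)

variable (n : ℕ)

/-- The generic mirabolic Hecke algebra `ℛ_n` over `ℂ(q)`. -/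
abbrev GenMirabolic (n : ℕ) : Type := MirabolicHecke K q n

/-- The generator `T_j` of `ℛ_n`, indexed by a natural number (junk value `0` if `j ≥ n`). -/
def Tnat (j : ℕ) : GenMirabolic n :=
  if h : j < n then MirabolicHecke.T ⟨j, h⟩ else 0

/-- The idempotent `e = q⁻¹(T_0 + 1)` of `ℛ_n`. -/
def eElt : GenMirabolic n := q⁻¹ • (Tnat n 0 + 1)

/-- The Jucys–Murphy element `L_i = q^{1−i}·T_{i−1}⋯T_1·e·T_1⋯T_{i−1}` of `ℛ_n`
(for `1 ≤ i ≤ n`; in particular `L_1 = e`). -/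
def JM (i : ℕ) : GenMirabolic n :=
  (q ^ (1 - (i : ℤ))) •
    (((List.range (i - 1)).reverse.map fun k => Tnat n (k + 1)).prod * eElt n *
      ((List.range (i - 1)).map fun k => Tnat n (k + 1)).prod)

end JM

section Eval

local notation "K" => RatFunc ℂ

/-- Evaluation of a multivariate polynomial `p ∈ ℂ(q)[x_1,…,x_n]` at the Jucys–Murphy
elements `L_1, …, L_n` of `ℛ_n`: each monomial `x_1^{s_1}⋯x_n^{s_n}` is evaluated as the
(ordered) product `L_1^{s_1}⋯L_n^{s_n}`.  Since the `L_i` pairwise commute, this is the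
value of `p` at `(L_1, …, L_n)`. -/
def evalJM (n : ℕ) (p : MvPolynomial (Fin n) K) : GenMirabolic n :=
  ∑ s ∈ p.support,
    MvPolynomial.coeff s p • ((List.finRange n).map fun i => JM n (i.val + 1) ^ s i).prod

end Eval
section Aux

local notation "K" => RatFunc ℂ
local notation "q" => (RatFunc.X : RatFunc ℂ)

namespace MirAux

variable {n : ℕ}

lemma hq : (q : K) ≠ 0 := RatFunc.X_ne_zero

lemma Tnat_eq (j : ℕ) (h : j < n) : Tnat n j = MirabolicHecke.T ⟨j, h⟩ := dif_pos h

lemma Tnat_zero (j : ℕ) (h : ¬ j < n) : Tnat n j = 0 := dif_neg h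

lemma mk_rel {x y : FreeAlgebra K (Fin n)} (h : SolomonRel K q n x y) :
    RingQuot.mkAlgHom K (SolomonRel K q n) x = RingQuot.mkAlgHom K (SolomonRel K q n) y :=
  RingQuot.mkAlgHom_rel _ h

lemma Tsq0 (h : 0 < n) :
    Tnat n 0 * Tnat n 0 = (q - 2) • Tnat n 0 + (q - 1) • (1 : GenMirabolic n) := by
  rw [Tnat_eq 0 h]
  have := mk_rel (SolomonRel.quad0 (n := n) ⟨0, h⟩ rfl)
  simpa [MirabolicHecke.T, map_add, map_mul, map_smul, map_one] using this

lemma Tsq (i : ℕ) (h1 : 1 ≤ i) (h2 : i < n) :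
    Tnat n i * Tnat n i = (q - 1) • Tnat n i + q • (1 : GenMirabolic n) := by
  rw [Tnat_eq i h2]
  have := mk_rel (SolomonRel.quad (n := n) ⟨i, h2⟩ h1)
  simpa [MirabolicHecke.T, map_add, map_mul, map_smul, map_one] using this

lemma braid (i : ℕ) (h1 : 1 ≤ i) (h2 : i + 1 < n) :
    Tnat n i * Tnat n (i+1) * Tnat n i = Tnat n (i+1) * Tnat n i * Tnat n (i+1) := by
  rw [Tnat_eq i (by omega), Tnat_eq (i+1) h2]
  have := mk_rel (SolomonRel.braid (n := n) ⟨i, by omega⟩ ⟨i+1, h2⟩ h1 rfl)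
  simpa [MirabolicHecke.T, map_mul] using this

lemma rel4' (h : 1 < n) :
    Tnat n 0 * Tnat n 1 * Tnat n 0 * Tnat n 1 =
      (q - 1) • (Tnat n 1 * Tnat n 0 * Tnat n 1 + Tnat n 1 * Tnat n 0) -
        Tnat n 0 * Tnat n 1 * Tnat n 0 := by
  rw [Tnat_eq 0 (by omega), Tnat_eq 1 h]
  have := mk_rel (SolomonRel.rel4 (n := n) ⟨0, by omega⟩ ⟨1, h⟩ rfl rfl)
  simpa [MirabolicHecke.T, map_add, map_sub, map_mul, map_smul] using this

lemma rel5' (h : 1 < n) :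
    Tnat n 1 * Tnat n 0 * Tnat n 1 * Tnat n 0 =
      (q - 1) • (Tnat n 1 * Tnat n 0 * Tnat n 1 + Tnat n 0 * Tnat n 1) -
        Tnat n 0 * Tnat n 1 * Tnat n 0 := by
  rw [Tnat_eq 0 (by omega), Tnat_eq 1 h]
  have := mk_rel (SolomonRel.rel5 (n := n) ⟨0, by omega⟩ ⟨1, h⟩ rfl rfl)
  simpa [MirabolicHecke.T, map_add, map_sub, map_mul, map_smul] using this

lemma commTT {i j : ℕ} (h : i + 2 ≤ j) : Commute (Tnat n i) (Tnat n j) := by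
  by_cases hj : j < n
  · rw [Tnat_eq i (by omega), Tnat_eq j hj]
    have := mk_rel (SolomonRel.comm (n := n) ⟨i, by omega⟩ ⟨j, hj⟩
      (Or.inl h))
    simpa [Commute, SemiconjBy, MirabolicHecke.T, map_mul] using this
  · rw [Tnat_zero j hj]; exact Commute.zero_right _

end MirAux
end Aux
section Aux2
local notation "K" => RatFunc ℂ
local notation "q" => (RatFunc.X : RatFunc ℂ)
namespace MirAux
variable {n : ℕ}

lemma JM_one : JM n 1 = eElt n := by simp [JM]

lemma JM_succ (i : ℕ) (h : 1 ≤ i) :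
    JM n (i+1) = q⁻¹ • (Tnat n i * JM n i * Tnat n i) := by
  obtain ⟨m, rfl⟩ : ∃ m, i = m + 1 := ⟨i - 1, by omega⟩
  simp only [JM, Nat.add_sub_cancel, List.range_succ]
  push_cast
  rw [show (1 : ℤ) - (m + 1 + 1) = (1 - (m + 1)) - 1 by ring, zpow_sub₀ hq, zpow_one]
  simp only [List.map_append, List.reverse_append, List.prod_append, List.map_cons,
    List.map_nil, List.reverse_cons, List.reverse_nil, List.prod_cons, List.prod_nil,
    List.nil_append, mul_one, one_mul]
  rw [mul_smul_comm, smul_mul_assoc, smul_smul]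
  congr 1
  · rw [div_eq_mul_inv, mul_comm]
  · simp [mul_assoc]

lemma T0_mul_e (h : 0 < n) : Tnat n 0 * eElt n = (q - 1) • eElt n := by
  rw [eElt, mul_smul_comm, mul_add, Tsq0 h, mul_one]
  simp only [smul_add, smul_smul]
  rw [add_right_comm, ← add_smul]
  congr 2 <;> ring

lemma e_mul_T0 (h : 0 < n) : eElt n * Tnat n 0 = (q - 1) • eElt n := by
  rw [eElt, smul_mul_assoc, add_mul, Tsq0 h, one_mul]
  simp only [smul_add, smul_smul]
  rw [add_right_comm, ← add_smul]
  congr 2 <;> ring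

lemma comm_T0_e : Commute (Tnat n 0) (eElt n) := by
  by_cases h : 0 < n
  · rw [Commute, SemiconjBy, T0_mul_e h, e_mul_T0 h]
  · rw [Tnat_zero 0 h]; exact Commute.zero_left _

end MirAux
end Aux2
section Aux3
local notation "K" => RatFunc ℂ
local notation "q" => (RatFunc.X : RatFunc ℂ)
namespace MirAux
variable {n : ℕ}

lemma csmul_right {A : Type} [Ring A] [Algebra K A] (r : K) {a b : A}
    (h : Commute a b) : Commute a (r • b) := by
  unfold Commute SemiconjBy
  rw [mul_smul_comm, smul_mul_assoc, h.eq]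

lemma csmul_left {A : Type} [Ring A] [Algebra K A] (r : K) {a b : A}
    (h : Commute a b) : Commute (r • a) b := ((csmul_right r h.symm)).symm

lemma comm_T_e (i : ℕ) (h : 2 ≤ i) : Commute (Tnat n i) (eElt n) :=
  csmul_right _ (((commTT (by omega : 0 + 2 ≤ i)).symm).add_right (Commute.one_right _))

/-- T_i commutes with L_k for k ≤ i - 1 (k ≥ 1). -/
lemma comm_T_JM_lt : ∀ k, 1 ≤ k → ∀ i, k + 1 ≤ i → Commute (Tnat n i) (JM n k) := by
  intro k
  induction k with
  | zero => omega
  | succ m ih =>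
    intro _ i hi
    rcases Nat.eq_zero_or_pos m with rfl | hm
    · rw [JM_one]; exact comm_T_e i (by omega)
    · rw [JM_succ m hm]
      exact csmul_right _
        (((commTT (by omega : m + 2 ≤ i)).symm.mul_right (ih hm i (by omega))).mul_right
          (commTT (by omega : m + 2 ≤ i)).symm)

/-- Core identity for T_0 commuting with L_2. -/
lemma T0_comm_core (h : 1 < n) :
    Commute (Tnat n 0) (Tnat n 1 * (Tnat n 0 + 1) * Tnat n 1) := by
  have h4 := rel4' h
  have h5 := rel5' h
  have h2 := Tsq 1 le_rfl h
  set a := Tnat n 0 with ha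
  set b := Tnat n 1 with hb
  show a * (b * (a + 1) * b) = (b * (a + 1) * b) * a
  calc a * (b * (a + 1) * b) = (a*b*a*b) + a*(b*b) := by noncomm_ring
    _ = ((q-1) • (b*a*b + b*a) - a*b*a) + a*((q-1) • b + q • (1 : GenMirabolic n)) := by
        rw [h4, h2]
    _ = ((q-1) • (b*a*b + a*b) - a*b*a) + ((q-1) • b + q • (1 : GenMirabolic n))*a := by
        simp only [mul_add, add_mul, mul_smul_comm, smul_mul_assoc, mul_one, one_mul, smul_add]
        abel
    _ = (b*a*b*a) + (b*b)*a := by rw [h5, h2]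
    _ = (b * (a + 1) * b) * a := by noncomm_ring


lemma comm_T0_JM : ∀ k, 1 ≤ k → Commute (Tnat n 0) (JM n k) := by
  intro k
  induction k with
  | zero => omega
  | succ m ih =>
    intro _
    rcases Nat.eq_zero_or_pos m with rfl | hm
    · rw [JM_one]; exact comm_T0_e
    · rcases Nat.eq_or_lt_of_le hm with h1 | h1
      · -- m = 1 : the hard case L_2
        rw [← h1, JM_succ 1 le_rfl, JM_one]
        by_cases hn : 1 < n
        · rw [eElt]
          have e1 : Tnat n 1 * ((q⁻¹ : K) • (Tnat n 0 + 1)) * Tnat n 1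
              = (q⁻¹ : K) • (Tnat n 1 * (Tnat n 0 + 1) * Tnat n 1) := by
            rw [mul_smul_comm, smul_mul_assoc]
          rw [e1]
          exact csmul_right _ (csmul_right _ (T0_comm_core hn))
        · rw [Tnat_zero 1 hn]
          simpa using Commute.zero_right _
      · rw [JM_succ m hm]
        exact csmul_right _
          (((commTT (by omega : 0 + 2 ≤ m)).mul_right (ih hm)).mul_right
            (commTT (by omega : 0 + 2 ≤ m)))

/-- Core identity for the chain `L_k` commutes with `T_k L_k T_k`, base case. -/
lemma chain_base (h : 1 < n) :
    Commute (Tnat n 0 + 1) (Tnat n 1 * (Tnat n 0 + 1) * Tnat n 1) := by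
  have h4 := rel4' h
  have h5 := rel5' h
  have h2 := Tsq 1 le_rfl h
  set a := Tnat n 0 with ha
  set b := Tnat n 1 with hb
  show (a + 1) * (b * (a + 1) * b) = (b * (a + 1) * b) * (a + 1)
  calc (a + 1) * (b * (a + 1) * b)
      = ((a*b*a*b) + a*(b*b)) + (b*a*b + b*b) := by noncomm_ring
    _ = (((q-1) • (b*a*b + b*a) - a*b*a) + a*((q-1) • b + q • (1 : GenMirabolic n)))
        + (b*a*b + ((q-1) • b + q • (1 : GenMirabolic n))) := by rw [h4, h2]
    _ = (((q-1) • (b*a*b + a*b) - a*b*a) + ((q-1) • b + q • (1 : GenMirabolic n))*a)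
        + (b*a*b + ((q-1) • b + q • (1 : GenMirabolic n))) := by
        simp only [mul_add, add_mul, mul_smul_comm, smul_mul_assoc, mul_one, one_mul, smul_add]
        abel
    _ = ((b*a*b*a) + (b*b)*a) + (b*a*b + b*b) := by rw [h5, h2]
    _ = (b * (a + 1) * b) * (a + 1) := by noncomm_ring


/-- Step identity. -/
lemma chain_step {A : Type} [Ring A] (t T L : A) (hb : t*T*t = T*t*T)
    (hc : T*L = L*T) (hM : L*t*L*t = t*(L*t*L)) :
    (t*L*t)*(T*(t*L*t)*T) = (T*(t*L*t)*T)*(t*L*t) := by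
  calc (t*L*t)*(T*(t*L*t)*T)
      = (t*L)*(t*T*t)*((L*t)*T) := by noncomm_ring
    _ = (t*L)*(T*t*T)*((L*t)*T) := by rw [hb]
    _ = t*(L*T)*((t*T)*(L*(t*T))) := by noncomm_ring
    _ = t*(T*L)*((t*T)*(L*(t*T))) := by rw [← hc]
    _ = ((t*T)*L*t)*(T*L)*(t*T) := by noncomm_ring
    _ = ((t*T)*L*t)*(L*T)*(t*T) := by rw [hc]
    _ = (t*T)*(L*t*L)*(T*t*T) := by noncomm_ring
    _ = (t*T)*(L*t*L)*(t*T*t) := by rw [← hb]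
    _ = (t*T)*(L*t*L*t)*(T*t) := by noncomm_ring
    _ = (t*T)*(t*(L*t*L))*(T*t) := by rw [hM]
    _ = (t*T*t)*((L*t*L)*(T*t)) := by noncomm_ring
    _ = (T*t*T)*((L*t*L)*(T*t)) := by rw [hb]
    _ = (T*t*T*L*t)*(L*T)*t := by noncomm_ring
    _ = (T*t*T*L*t)*(T*L)*t := by rw [← hc]
    _ = (T*t)*(T*L)*((t*T)*(L*t)) := by noncomm_ring
    _ = (T*t)*(L*T)*((t*T)*(L*t)) := by rw [hc]
    _ = (T*t*L)*(T*t*T)*(L*t) := by noncomm_ring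
    _ = (T*t*L)*(t*T*t)*(L*t) := by rw [← hb]
    _ = (T*(t*L*t)*T)*(t*L*t) := by noncomm_ring

/-- `L_k` commutes with `T_k L_k T_k` for all `k ≥ 1`. -/
lemma chain : ∀ k, 1 ≤ k → Commute (JM n k) (Tnat n k * JM n k * Tnat n k) := by
  intro k
  induction k with
  | zero => omega
  | succ m ih =>
    intro _
    rcases Nat.eq_zero_or_pos m with rfl | hm
    · -- k = 1
      rw [JM_one]
      by_cases h : 1 < n
      · rw [eElt]
        have e1 : Tnat n 1 * ((q⁻¹ : K) • (Tnat n 0 + 1)) * Tnat n 1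
            = (q⁻¹ : K) • (Tnat n 1 * (Tnat n 0 + 1) * Tnat n 1) := by
          rw [mul_smul_comm, smul_mul_assoc]
        rw [e1]
        exact csmul_left _ (csmul_right _ (chain_base h))
      · rw [Tnat_zero 1 h]
        simpa using Commute.zero_right _
    · -- k = m + 1, m ≥ 1
      by_cases h : m + 1 < n
      · rw [JM_succ m hm]
        have hb := braid m hm h
        have hc : Tnat n (m+1) * JM n m = JM n m * Tnat n (m+1) :=
          (comm_T_JM_lt m hm (m+1) le_rfl).eq
        have hM : JM n m * Tnat n m * JM n m * Tnat n m
            = Tnat n m * (JM n m * Tnat n m * JM n m) := by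
          have := (ih hm).eq
          calc JM n m * Tnat n m * JM n m * Tnat n m
              = JM n m * (Tnat n m * JM n m * Tnat n m) := by noncomm_ring
            _ = Tnat n m * JM n m * Tnat n m * JM n m := this
            _ = Tnat n m * (JM n m * Tnat n m * JM n m) := by noncomm_ring
        have core := chain_step (Tnat n m) (Tnat n (m+1)) (JM n m) hb hc hM
        have e1 : Tnat n (m+1) * ((q⁻¹ : K) • (Tnat n m * JM n m * Tnat n m)) * Tnat n (m+1)
            = (q⁻¹ : K) • (Tnat n (m+1) * (Tnat n m * JM n m * Tnat n m) * Tnat n (m+1)) := by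
          rw [mul_smul_comm, smul_mul_assoc]
        rw [e1]
        exact csmul_left _ (csmul_right _ core)
      · rw [Tnat_zero (m+1) h]
        simpa using Commute.zero_right _

end MirAux
end Aux3
section Aux4
local notation "K" => RatFunc ℂ
local notation "q" => (RatFunc.X : RatFunc ℂ)
namespace MirAux
variable {n : ℕ}

/-- T_i commutes with L_k for k ≥ i+2 (i ≥ 1). -/
lemma comm_T_JM_gt (i : ℕ) (hi : 1 ≤ i) : ∀ k, i + 2 ≤ k → Commute (Tnat n i) (JM n k) := by
  intro k
  induction k with
  | zero => omega
  | succ m ih =>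
    intro hm
    rcases Nat.lt_or_ge (i + 2) (m + 1) with h1 | h1
    · rw [JM_succ m (by omega)]
      exact csmul_right _ (((commTT (by omega : i + 2 ≤ m)).mul_right (ih (by omega))).mul_right
        (commTT (by omega : i + 2 ≤ m)))
    · -- m + 1 = i + 2, the base case
      have hm2 : m = i + 1 := by omega
      subst hm2
      rw [JM_succ (i+1) (by omega), JM_succ i hi]
      by_cases hn : i + 1 < n
      · have hb := braid i hi hn
        have hc : Tnat n (i+1) * JM n i = JM n i * Tnat n (i+1) :=
          (comm_T_JM_lt i hi (i+1) le_rfl).eq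
        set ti := Tnat n i
        set t1 := Tnat n (i+1)
        set L := JM n i
        have e1 : t1 * ((q⁻¹ : K) • (ti * L * ti)) * t1
            = (q⁻¹ : K) • (t1 * (ti * L * ti) * t1) := by
          rw [mul_smul_comm, smul_mul_assoc]
        rw [e1]
        apply csmul_right
        apply csmul_right
        show ti * (t1 * (ti * L * ti) * t1) = (t1 * (ti * L * ti) * t1) * ti
        calc ti * (t1 * (ti * L * ti) * t1)
            = (ti*t1*ti)*(L*(ti*t1)) := by noncomm_ring
          _ = (t1*ti*t1)*(L*(ti*t1)) := by rw [hb]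
          _ = (t1*ti)*(t1*L)*(ti*t1) := by noncomm_ring
          _ = (t1*ti)*(L*t1)*(ti*t1) := by rw [hc]
          _ = (t1*ti*L)*(t1*ti*t1) := by noncomm_ring
          _ = (t1*ti*L)*(ti*t1*ti) := by rw [← hb]
          _ = (t1 * (ti * L * ti) * t1) * ti := by noncomm_ring
      · rw [Tnat_zero (i+1) hn]
        simp only [zero_mul, mul_zero, smul_zero]
        exact Commute.zero_right _

lemma comm_T_symm1 (i : ℕ) (hi : 1 ≤ i) :
    Commute (Tnat n i) (JM n i + JM n (i+1)) := by
  by_cases hn : i < n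
  · rw [JM_succ i hi]
    set T := Tnat n i
    set L := JM n i
    show T * (L + (q⁻¹ : K) • (T*L*T)) = (L + (q⁻¹ : K) • (T*L*T)) * T
    rw [mul_add, add_mul, mul_smul_comm, smul_mul_assoc]
    have e1 : T*(T*L*T) = (T*T)*(L*T) := by noncomm_ring
    have e2 : T*L*T*T = (T*L)*(T*T) := by noncomm_ring
    rw [e1, e2, Tsq i hi hn]
    simp only [add_mul, mul_add, smul_mul_assoc, mul_smul_comm, one_mul, mul_one, smul_add,
      smul_smul, inv_mul_cancel₀ hq, one_smul, mul_assoc]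
    abel
  · rw [Tnat_zero i hn]
    exact Commute.zero_left _

lemma comm_T_symm2 (i : ℕ) (hi : 1 ≤ i) :
    Commute (Tnat n i) (JM n i * JM n (i+1)) := by
  rw [JM_succ i hi]
  set T := Tnat n i
  set L := JM n i
  have e1 : L * ((q⁻¹ : K) • (T*L*T)) = (q⁻¹ : K) • (L*(T*L*T)) := mul_smul_comm _ _ _
  rw [e1]
  apply csmul_right
  show T * (L*(T*L*T)) = (L*(T*L*T)) * T
  conv_rhs => rw [(chain i hi).eq]
  noncomm_ring

end MirAux
end Aux4
section Aux5
local notation "K" => RatFunc ℂ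
local notation "q" => (RatFunc.X : RatFunc ℂ)
namespace MirAux
variable {n : ℕ}

lemma comm_JM_JM_le : ∀ j, 1 ≤ j → ∀ k, j ≤ k → Commute (JM n j) (JM n k) := by
  intro j hj k
  induction k with
  | zero => omega
  | succ m ih =>
    intro hm
    rcases Nat.lt_or_ge j (m+1) with h1 | h1
    · rcases Nat.eq_or_lt_of_le (by omega : j ≤ m) with h2 | h2
      · subst h2
        rw [JM_succ j hj]
        exact csmul_right _ (chain j hj)
      · rw [JM_succ m (by omega)]
        exact csmul_right _
          (((comm_T_JM_lt j hj m (by omega)).symm.mul_right (ih (by omega))).mul_right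
            (comm_T_JM_lt j hj m (by omega)).symm)
    · have : j = m + 1 := by omega
      subst this
      exact Commute.refl _

lemma comm_JM_JM (j k : ℕ) (hj : 1 ≤ j) (hk : 1 ≤ k) : Commute (JM n j) (JM n k) := by
  rcases Nat.le_total j k with h | h
  · exact comm_JM_JM_le j hj k h
  · exact (comm_JM_JM_le k hk j h).symm

lemma mem_center_of_commute_T (x : GenMirabolic n)
    (hx : ∀ i : Fin n, Commute (MirabolicHecke.T i) x) :
    x ∈ Subalgebra.center K (GenMirabolic n) := by
  rw [Subalgebra.mem_center_iff]
  intro y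
  obtain ⟨z, rfl⟩ := RingQuot.mkAlgHom_surjective K (SolomonRel K q n) y
  induction z using FreeAlgebra.induction with
  | grade0 r => rw [AlgHom.commutes]; exact (Algebra.commutes r x)
  | grade1 i => exact (hx i).eq
  | mul a b ha hb =>
      rw [map_mul, mul_assoc, hb, ← mul_assoc, ha, mul_assoc]
  | add a b ha hb => rw [map_add, add_mul, mul_add, ha, hb]

end MirAux
end Aux5
section Aux6
local notation "K" => RatFunc ℂ
local notation "q" => (RatFunc.X : RatFunc ℂ)
namespace MirAux
variable (n : ℕ)

def Lset : Set (GenMirabolic n) := Set.range (fun i : Fin n => JM n (i.val + 1))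

lemma Lset_comm : ∀ a ∈ Lset n, ∀ b ∈ Lset n, a * b = b * a := by
  rintro a ⟨i, rfl⟩ b ⟨j, rfl⟩
  exact (comm_JM_JM (i.val+1) (j.val+1) (by omega) (by omega)).eq

def Csub : Subalgebra K (GenMirabolic n) := Algebra.adjoin K (Lset n)

noncomputable instance : CommRing (Csub n) :=
  { (Csub n).toRing with mul_comm := (Algebra.adjoinCommRingOfComm K (Lset_comm n)).mul_comm }

def gvec (i : Fin n) : Csub n :=
  ⟨JM n (i.val + 1), Algebra.subset_adjoin (Set.mem_range_self i)⟩

def Phi : MvPolynomial (Fin n) K →ₐ[K] GenMirabolic n :=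
  ((Csub n).val).comp (MvPolynomial.aeval (gvec n))

lemma Phi_X (i : Fin n) : Phi n (MvPolynomial.X i) = JM n (i.val + 1) := by
  simp [Phi, gvec]

lemma Phi_monomial (s : Fin n →₀ ℕ) :
    Phi n (MvPolynomial.monomial s 1)
      = ((List.finRange n).map fun i => JM n (i.val + 1) ^ s i).prod := by
  rw [Phi, AlgHom.comp_apply, MvPolynomial.aeval_monomial, map_one, one_mul]
  have h1 : (s.prod fun i e => gvec n i ^ e) = ∏ i : Fin n, gvec n i ^ s i := by
    rw [Finsupp.prod]
    apply Finset.prod_subset (Finset.subset_univ _)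
    intro i _ hi
    rw [Finsupp.notMem_support_iff.mp hi, pow_zero]
  rw [h1, Fin.prod_univ_def, map_list_prod, List.map_map]
  refine congrArg (fun f => ((List.finRange n).map f).prod) ?_
  funext i
  simp [gvec]

lemma evalJM_eq (p : MvPolynomial (Fin n) K) : evalJM n p = Phi n p := by
  conv_rhs => rw [← p.support_sum_monomial_coeff]
  rw [map_sum, evalJM]
  apply Finset.sum_congr rfl
  intro s _
  rw [← Phi_monomial]
  rw [show MvPolynomial.monomial s (MvPolynomial.coeff s p)
      = MvPolynomial.coeff s p • MvPolynomial.monomial s 1 by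
    rw [MvPolynomial.smul_monomial, smul_eq_mul, mul_one], map_smul]

end MirAux
end Aux6
section Aux7
local notation "K" => RatFunc ℂ
namespace MirAux
open MvPolynomial
variable {n : ℕ}

def badSet (a b : Fin n) : Set (MvPolynomial (Fin n) K) :=
  {P : MvPolynomial (Fin n) K | ∃ j : Fin n, j ≠ a ∧ j ≠ b ∧ P = (X j : MvPolynomial (Fin n) K)}
    ∪ {X a + X b, X a * X b}

lemma powsum_mem (a b : Fin n) : ∀ m : ℕ,
    (X a : MvPolynomial (Fin n) K) ^ m + (X b) ^ m ∈ Algebra.adjoin K (badSet a b) := by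
  intro m
  induction m using Nat.strong_induction_on with
  | _ m ih =>
    match m with
    | 0 => simpa using add_mem (one_mem _) (one_mem _)
    | 1 =>
      simp only [pow_one]
      exact Algebra.subset_adjoin (Or.inr (Set.mem_insert _ _))
    | (m+2) =>
      have key : (X a : MvPolynomial (Fin n) K) ^ (m+2) + (X b) ^ (m+2)
          = (X a + X b) * ((X a) ^ (m+1) + (X b) ^ (m+1))
            - (X a * X b) * ((X a) ^ m + (X b) ^ m) := by ring
      rw [key]
      exact sub_mem
        (mul_mem (Algebra.subset_adjoin (Or.inr (Set.mem_insert _ _))) (ih (m+1) (by omega)))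
        (mul_mem (Algebra.subset_adjoin (Or.inr (Set.mem_insert_of_mem _ (Set.mem_singleton _))))
          (ih m (by omega)))

lemma mixed_mem (a b : Fin n) (s t : ℕ) :
    (X a : MvPolynomial (Fin n) K) ^ s * (X b) ^ t + (X a) ^ t * (X b) ^ s
      ∈ Algebra.adjoin K (badSet a b) := by
  have key : ∀ s t : ℕ, s ≤ t →
      (X a : MvPolynomial (Fin n) K) ^ s * (X b) ^ t + (X a) ^ t * (X b) ^ s
        ∈ Algebra.adjoin K (badSet a b) := by
    intro s t hst
    obtain ⟨d, rfl⟩ : ∃ d, t = s + d := ⟨t - s, by omega⟩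
    have e : (X a : MvPolynomial (Fin n) K) ^ s * (X b) ^ (s+d) + (X a) ^ (s+d) * (X b) ^ s
        = (X a * X b) ^ s * ((X a) ^ d + (X b) ^ d) := by ring
    rw [e]
    refine mul_mem (pow_mem (Algebra.subset_adjoin ?_) s) (powsum_mem a b d)
    exact Or.inr (Set.mem_insert_of_mem _ (Set.mem_singleton _))
  rcases le_total s t with h | h
  · exact key s t h
  · rw [add_comm]; exact key t s h

lemma mapDomain_swap (a b : Fin n) (hab : a ≠ b) (s : Fin n →₀ ℕ) :
    Finsupp.mapDomain (Equiv.swap a b) s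
      = (s.erase a).erase b + Finsupp.single a (s b) + Finsupp.single b (s a) := by
  ext x
  rw [Finsupp.mapDomain_equiv_apply, Equiv.symm_swap]
  simp only [Finsupp.add_apply, Finsupp.single_apply]
  rcases eq_or_ne x a with rfl | hxa
  · simp [Equiv.swap_apply_left, Finsupp.erase_ne hab, Finsupp.erase_same,
      Ne.symm hab, hab]
  · rcases eq_or_ne x b with rfl | hxb
    · simp [Equiv.swap_apply_right, Finsupp.erase_same, Ne.symm hxa]
    · simp [Equiv.swap_apply_of_ne_of_ne hxa hxb, Finsupp.erase_ne hxb,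
        Finsupp.erase_ne hxa, Ne.symm hxa, Ne.symm hxb]

lemma sum3_eq (a b : Fin n) (hab : a ≠ b) (s : Fin n →₀ ℕ) :
    (s.erase a).erase b + Finsupp.single a (s a) + Finsupp.single b (s b) = s := by
  ext x
  simp only [Finsupp.add_apply, Finsupp.single_apply]
  rcases eq_or_ne x a with rfl | hxa
  · simp [Finsupp.erase_ne hab, Finsupp.erase_same, Ne.symm hab, hab]
  · rcases eq_or_ne x b with rfl | hxb
    · simp [Finsupp.erase_same, Ne.symm hxa]
    · simp [Finsupp.erase_ne hxb, Finsupp.erase_ne hxa, Ne.symm hxa, Ne.symm hxb]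

end MirAux
end Aux7
section Aux8
local notation "K" => RatFunc ℂ
namespace MirAux
open MvPolynomial
variable {n : ℕ}

lemma monomial_add3 (a b : Fin n) (E : Fin n →₀ ℕ) (u v : ℕ) :
    (monomial (E + Finsupp.single a u + Finsupp.single b v) (1:K) : MvPolynomial (Fin n) K)
      = monomial E 1 * X a ^ u * X b ^ v := by
  rw [X_pow_eq_monomial, X_pow_eq_monomial, monomial_mul, monomial_mul, one_mul, one_mul]

lemma eraseE_mem (a b : Fin n) (s : Fin n →₀ ℕ) :
    (monomial ((s.erase a).erase b) (1:K) : MvPolynomial (Fin n) K)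
      ∈ Algebra.adjoin K (badSet a b) := by
  rw [monomial_eq, map_one, one_mul, Finsupp.prod]
  refine prod_mem fun j hj => pow_mem (Algebra.subset_adjoin ?_) _
  rw [Finsupp.support_erase, Finset.mem_erase, Finsupp.support_erase, Finset.mem_erase] at hj
  exact Or.inl ⟨j, hj.2.1, hj.1, rfl⟩

lemma symm_mem_adjoin (a b : Fin n) (hab : a ≠ b) (p : MvPolynomial (Fin n) K)
    (hp : rename (⇑(Equiv.swap a b)) p = p) : p ∈ Algebra.adjoin K (badSet a b) := by
  have h2 : p = (2⁻¹ : K) • (p + rename (⇑(Equiv.swap a b)) p) := by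
    rw [hp, ← two_smul K p, smul_smul, inv_mul_cancel₀ (by
      have : CharZero (RatFunc ℂ) :=
        charZero_of_injective_algebraMap (algebraMap ℂ (RatFunc ℂ)).injective
      exact two_ne_zero : (2:K) ≠ 0), one_smul]
  rw [h2]
  refine Subalgebra.smul_mem _ ?_ _
  have expand : p + rename (⇑(Equiv.swap a b)) p
      = ∑ s ∈ p.support, ((monomial s (coeff s p))
          + monomial (Finsupp.mapDomain (⇑(Equiv.swap a b)) s) (coeff s p)) := by
    rw [Finset.sum_add_distrib]
    congr 1
    · exact (support_sum_monomial_coeff p).symm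
    · conv_lhs => rw [← support_sum_monomial_coeff p]
      rw [map_sum]
      exact Finset.sum_congr rfl fun s _ => rename_monomial _ s _
  rw [expand]
  refine sum_mem fun s _ => ?_
  have d1 : (monomial s (coeff s p) : MvPolynomial (Fin n) K)
      = coeff s p • (monomial ((s.erase a).erase b) 1 * X a ^ s a * X b ^ s b) := by
    rw [← monomial_add3, sum3_eq a b hab s, smul_monomial, smul_eq_mul, mul_one]
  have d2 : (monomial (Finsupp.mapDomain (⇑(Equiv.swap a b)) s) (coeff s p)
        : MvPolynomial (Fin n) K)
      = coeff s p • (monomial ((s.erase a).erase b) 1 * X a ^ s b * X b ^ s a) := by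
    rw [← monomial_add3, ← mapDomain_swap a b hab s, smul_monomial, smul_eq_mul, mul_one]
  rw [d1, d2, ← smul_add]
  have comb : (monomial ((s.erase a).erase b) (1:K) * X a ^ s a * X b ^ s b
        + monomial ((s.erase a).erase b) 1 * X a ^ s b * X b ^ s a : MvPolynomial (Fin n) K)
      = monomial ((s.erase a).erase b) 1 * (X a ^ s a * X b ^ s b + X a ^ s b * X b ^ s a) := by
    ring
  rw [comb]
  exact Subalgebra.smul_mem _
    (mul_mem (eraseE_mem a b s) (mixed_mem a b (s a) (s b))) _

end MirAux
end Aux8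
section Stmt12

local notation "K" => RatFunc ℂ

/-- For every symmetric polynomial `p ∈ ℂ(q)[x_1,…,x_n]`, the evaluation
`p(L_1, …, L_n)` at the Jucys–Murphy elements lies in the center of `ℛ_n`. -/
theorem evalJM_symmetric_mem_center (n : ℕ) (p : MvPolynomial (Fin n) K)
    (hp : p.IsSymmetric) :
    evalJM n p ∈ Subalgebra.center K (GenMirabolic n) := by
  apply MirAux.mem_center_of_commute_T
  intro i
  rw [MirAux.evalJM_eq]
  have hT : MirabolicHecke.T i = Tnat n i.val := (MirAux.Tnat_eq i.val i.isLt).symm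
  rw [hT]
  rcases Nat.eq_zero_or_pos i.val with h0 | h1
  · -- the generator T_0 commutes with every JM element
    rw [h0]
    have hmem : MirAux.Phi n p ∈ MirAux.Csub n := by
      show ((MirAux.Csub n).val) ((MvPolynomial.aeval (MirAux.gvec n)) p) ∈ _
      exact SetLike.coe_mem _
    have hc : MirAux.Csub n ≤ Subalgebra.centralizer K {Tnat n 0} := by
      apply Algebra.adjoin_le
      rintro x ⟨j, rfl⟩
      simp only [SetLike.mem_coe, Subalgebra.mem_centralizer_iff]
      intro g hg
      rw [Set.mem_singleton_iff] at hg
      subst hg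
      exact (MirAux.comm_T0_JM (j.val + 1) (by omega)).eq
    have hfin := hc hmem
    rw [Subalgebra.mem_centralizer_iff] at hfin
    exact hfin _ (Set.mem_singleton _)
  · set a : Fin n := ⟨i.val - 1, by omega⟩ with haa
    have hav : a.val = i.val - 1 := rfl
    have hab : a ≠ i := by
      intro h
      have := congrArg Fin.val h
      rw [hav] at this
      omega
    have hmem := MirAux.symm_mem_adjoin a i hab p (hp (Equiv.swap a i))
    have himg : MirAux.Phi n p ∈ Algebra.adjoin K (MirAux.Phi n '' MirAux.badSet a i) := by
      rw [← AlgHom.map_adjoin]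
      exact Subalgebra.mem_map.mpr ⟨p, hmem, rfl⟩
    have hcent : Algebra.adjoin K (MirAux.Phi n '' MirAux.badSet a i)
        ≤ Subalgebra.centralizer K {Tnat n i.val} := by
      apply Algebra.adjoin_le
      rintro x ⟨P, hP, rfl⟩
      simp only [SetLike.mem_coe, Subalgebra.mem_centralizer_iff]
      intro g hg
      rw [Set.mem_singleton_iff] at hg
      subst hg
      rcases hP with ⟨j, hja, hji, rfl⟩ | hP
      · rw [MirAux.Phi_X]
        rcases Nat.lt_or_ge j.val i.val with hlt | hge
        · have hne : j.val ≠ i.val - 1 := by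
            intro h
            exact hja (Fin.ext (by rw [hav, h]))
          exact (MirAux.comm_T_JM_lt (j.val + 1) (by omega) i.val (by omega)).eq
        · have hne : j.val ≠ i.val := fun h => hji (Fin.ext h)
          exact (MirAux.comm_T_JM_gt i.val h1 (j.val + 1) (by omega)).eq
      · have hca : a.val + 1 = i.val := by rw [hav]; omega
        rcases hP with rfl | hP
        · rw [map_add, MirAux.Phi_X, MirAux.Phi_X, hca]
          have h2 : i.val + 1 = i.val + 1 := rfl
          exact (MirAux.comm_T_symm1 i.val h1).eq
        · rw [Set.mem_singleton_iff] at hP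
          subst hP
          rw [map_mul, MirAux.Phi_X, MirAux.Phi_X, hca]
          exact (MirAux.comm_T_symm2 i.val h1).eq
    have hfin := hcent himg
    rw [Subalgebra.mem_centralizer_iff] at hfin
    exact hfin _ (Set.mem_singleton _)

end Stmt12
end
end

section
/- In the generic mirabolic Hecke algebra ℛ_n over ℂ(q), the Jucys–Murphy element L_n = q^{1−n}·T_{n−1}⋯T_1·e·T_1⋯T_{n−1} commutes with e and with T_i for every 1 ≤ i ≤ n−2; consequently L_n commutes with every element of the subalgebra of ℛ_n generated by e, T_1, …, T_{n−2} (the image of ℛ_{n−1} under the natural inclusion). -/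
noncomputable section

section JM

local notation "K" => RatFunc ℂ
local notation "q" => (RatFunc.X : RatFunc ℂ)

variable (n : ℕ)

end JM

section Aux

local notation "K" => RatFunc ℂ
local notation "q" => (RatFunc.X : RatFunc ℂ)

variable (n : ℕ)

lemma Tnat_eq_of_lt {j : ℕ} (h : j < n) : Tnat n j = MirabolicHecke.T ⟨j, h⟩ := dif_pos h

lemma Tnat_eq_zero {j : ℕ} (h : ¬ j < n) : Tnat n j = 0 := dif_neg h

lemma Tnat_comm {i j : ℕ} (h : i + 2 ≤ j) : Commute (Tnat n i) (Tnat n j) := by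
  by_cases hj : j < n
  · have hi : i < n := by omega
    rw [Tnat_eq_of_lt n hi, Tnat_eq_of_lt n hj]
    have := RingQuot.mkAlgHom_rel K
      (s := SolomonRel (RatFunc ℂ) RatFunc.X n) (SolomonRel.comm ⟨i, hi⟩ ⟨j, hj⟩ (Or.inl h))
    simp only [map_mul] at this
    exact this
  · rw [Tnat_eq_zero n hj]; exact Commute.zero_right _

lemma Tnat_braid {j : ℕ} (hj : 1 ≤ j) :
    Tnat n j * Tnat n (j + 1) * Tnat n j = Tnat n (j + 1) * Tnat n j * Tnat n (j + 1) := by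
  by_cases h1 : j + 1 < n
  · have h0 : j < n := by omega
    rw [Tnat_eq_of_lt n h0, Tnat_eq_of_lt n h1]
    have := RingQuot.mkAlgHom_rel K
      (s := SolomonRel (RatFunc ℂ) RatFunc.X n) (SolomonRel.braid ⟨j, h0⟩ ⟨j + 1, h1⟩ hj rfl)
    simp only [map_mul] at this
    exact this
  · rw [Tnat_eq_zero n h1]
    simp

lemma Tnat_quad {j : ℕ} (h1 : 1 ≤ j) (h2 : j < n) :
    Tnat n j * Tnat n j = (q - 1) • Tnat n j + q • (1 : GenMirabolic n) := by
  rw [Tnat_eq_of_lt n h2]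
  have := RingQuot.mkAlgHom_rel K
    (s := SolomonRel (RatFunc ℂ) RatFunc.X n) (SolomonRel.quad ⟨j, h2⟩ h1)
  simp only [map_mul, map_add, map_smul, map_one] at this
  exact this

lemma Tnat_rel4 (h0 : 0 < n) (h1 : 1 < n) :
    Tnat n 0 * Tnat n 1 * Tnat n 0 * Tnat n 1 =
      (q - 1) • (Tnat n 1 * Tnat n 0 * Tnat n 1 + Tnat n 1 * Tnat n 0) -
        Tnat n 0 * Tnat n 1 * Tnat n 0 := by
  rw [Tnat_eq_of_lt n h0, Tnat_eq_of_lt n h1]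
  have := RingQuot.mkAlgHom_rel K
    (s := SolomonRel (RatFunc ℂ) RatFunc.X n) (SolomonRel.rel4 ⟨0, h0⟩ ⟨1, h1⟩ rfl rfl)
  simp only [map_mul, map_add, map_smul, map_sub] at this
  exact this

lemma Tnat_rel5 (h0 : 0 < n) (h1 : 1 < n) :
    Tnat n 1 * Tnat n 0 * Tnat n 1 * Tnat n 0 =
      (q - 1) • (Tnat n 1 * Tnat n 0 * Tnat n 1 + Tnat n 0 * Tnat n 1) -
        Tnat n 0 * Tnat n 1 * Tnat n 0 := by
  rw [Tnat_eq_of_lt n h0, Tnat_eq_of_lt n h1]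
  have := RingQuot.mkAlgHom_rel K
    (s := SolomonRel (RatFunc ℂ) RatFunc.X n) (SolomonRel.rel5 ⟨0, h0⟩ ⟨1, h1⟩ rfl rfl)
  simp only [map_mul, map_add, map_smul, map_sub] at this
  exact this

lemma e_comm_T {j : ℕ} (h : 2 ≤ j) : Commute (eElt n) (Tnat n j) := by
  have h0 : Commute (Tnat n 0) (Tnat n j) := Tnat_comm n h
  exact Commute.smul_left (h0.add_left (Commute.one_left _)) _

/-- The descending product `T_m ⋯ T_1`. -/
def Ddesc : ℕ → GenMirabolic n
  | 0 => 1
  | m + 1 => Tnat n (m + 1) * Ddesc m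

/-- The ascending product `T_1 ⋯ T_m`. -/
def Aasc : ℕ → GenMirabolic n
  | 0 => 1
  | m + 1 => Aasc m * Tnat n (m + 1)

lemma Ddesc_zero : Ddesc n 0 = 1 := rfl
lemma Ddesc_succ (m : ℕ) : Ddesc n (m + 1) = Tnat n (m + 1) * Ddesc n m := rfl
lemma Aasc_zero : Aasc n 0 = 1 := rfl
lemma Aasc_succ (m : ℕ) : Aasc n (m + 1) = Aasc n m * Tnat n (m + 1) := rfl

lemma Ddesc_eq : ∀ m : ℕ,
    ((List.range m).reverse.map fun k => Tnat n (k + 1)).prod = Ddesc n m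
  | 0 => by simp [Ddesc_zero]
  | m + 1 => by
      rw [List.range_succ]
      simp only [List.reverse_append, List.reverse_cons, List.reverse_nil, List.nil_append,
        List.singleton_append, List.map_cons, List.prod_cons, Ddesc_succ, Ddesc_eq m]

lemma Aasc_eq : ∀ m : ℕ,
    ((List.range m).map fun k => Tnat n (k + 1)).prod = Aasc n m
  | 0 => by simp [Aasc_zero]
  | m + 1 => by
      rw [List.range_succ]
      simp only [List.map_append, List.map_cons, List.map_nil, List.prod_append,
        List.prod_cons, List.prod_nil, mul_one, Aasc_succ, Aasc_eq m]

lemma T_comm_Ddesc {j : ℕ} : ∀ m : ℕ, m + 2 ≤ j → Commute (Tnat n j) (Ddesc n m)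
  | 0, _ => Commute.one_right _
  | m + 1, h => by
      rw [Ddesc_succ]
      exact ((Tnat_comm n (i := m + 1) (by omega)).symm).mul_right
        (T_comm_Ddesc m (by omega))

lemma T_comm_Aasc {j : ℕ} : ∀ m : ℕ, m + 2 ≤ j → Commute (Tnat n j) (Aasc n m)
  | 0, _ => Commute.one_right _
  | m + 1, h => by
      rw [Aasc_succ]
      exact (T_comm_Aasc m (by omega)).mul_right
        ((Tnat_comm n (i := m + 1) (by omega)).symm)

lemma shiftD : ∀ m : ℕ, ∀ i : ℕ, 1 ≤ i → i + 1 ≤ m →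
    Tnat n i * Ddesc n m = Ddesc n m * Tnat n (i + 1)
  | 0, i, _, h => absurd h (by omega)
  | m + 1, i, h1, h2 => by
      rcases Nat.lt_or_ge (i + 1) (m + 1) with hlt | hge
      · -- i + 1 ≤ m
        have hc : Commute (Tnat n i) (Tnat n (m + 1)) := Tnat_comm n (by omega)
        rw [Ddesc_succ, ← mul_assoc, hc.eq, mul_assoc, shiftD m i h1 (by omega),
          ← mul_assoc]
      · -- i = m
        have him : i = m := by omega
        subst him
        obtain ⟨k, rfl⟩ : ∃ k, i = k + 1 := ⟨i - 1, by omega⟩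
        have hb := Tnat_braid n (j := k + 1) (by omega)
        have hcd : Commute (Tnat n (k + 1 + 1)) (Ddesc n k) := T_comm_Ddesc n k (by omega)
        rw [Ddesc_succ, Ddesc_succ]
        calc Tnat n (k + 1) * (Tnat n (k + 1 + 1) * (Tnat n (k + 1) * Ddesc n k))
            = (Tnat n (k + 1) * Tnat n (k + 1 + 1) * Tnat n (k + 1)) * Ddesc n k := by
              simp only [mul_assoc]
          _ = (Tnat n (k + 1 + 1) * Tnat n (k + 1) * Tnat n (k + 1 + 1)) * Ddesc n k := by
              rw [hb]
          _ = Tnat n (k + 1 + 1) * Tnat n (k + 1) * (Tnat n (k + 1 + 1) * Ddesc n k) := by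
              simp only [mul_assoc]
          _ = Tnat n (k + 1 + 1) * Tnat n (k + 1) * (Ddesc n k * Tnat n (k + 2)) := by
              rw [hcd.eq]
          _ = Tnat n (k + 1 + 1) * (Tnat n (k + 1) * Ddesc n k) * Tnat n (k + 1 + 1) := by
              simp only [mul_assoc]

lemma shiftA : ∀ m : ℕ, ∀ i : ℕ, 1 ≤ i → i + 1 ≤ m →
    Aasc n m * Tnat n i = Tnat n (i + 1) * Aasc n m
  | 0, i, _, h => absurd h (by omega)
  | m + 1, i, h1, h2 => by
      rcases Nat.lt_or_ge (i + 1) (m + 1) with hlt | hge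
      · have hc : Commute (Tnat n i) (Tnat n (m + 1)) := Tnat_comm n (by omega)
        rw [Aasc_succ, mul_assoc, ← hc.eq, ← mul_assoc, shiftA m i h1 (by omega),
          mul_assoc]
      · have him : i = m := by omega
        subst him
        obtain ⟨k, rfl⟩ : ∃ k, i = k + 1 := ⟨i - 1, by omega⟩
        have hb := Tnat_braid n (j := k + 1) (by omega)
        have hca : Commute (Tnat n (k + 1 + 1)) (Aasc n k) := T_comm_Aasc n k (by omega)
        rw [Aasc_succ, Aasc_succ]
        calc Aasc n k * Tnat n (k + 1) * Tnat n (k + 1 + 1) * Tnat n (k + 1)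
            = Aasc n k * (Tnat n (k + 1) * Tnat n (k + 1 + 1) * Tnat n (k + 1)) := by
              simp only [mul_assoc]
          _ = Aasc n k * (Tnat n (k + 1 + 1) * Tnat n (k + 1) * Tnat n (k + 1 + 1)) := by
              rw [hb]
          _ = (Tnat n (k + 1 + 1) * Aasc n k) * Tnat n (k + 1) * Tnat n (k + 1 + 1) := by
              rw [hca.eq]; simp only [mul_assoc]
          _ = Tnat n (k + 1 + 1) * (Aasc n k * Tnat n (k + 1) * Tnat n (k + 1 + 1)) := by
              simp only [mul_assoc]

lemma key_eT1eT1 : Commute (eElt n) (Tnat n 1 * eElt n * Tnat n 1) := by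
  by_cases hn : 2 ≤ n
  · have h0 : 0 < n := by omega
    have h1 : 1 < n := by omega
    have r1 := Tnat_rel4 n h0 h1
    have r2 := Tnat_rel5 n h0 h1
    have r3 := Tnat_quad n (j := 1) le_rfl h1
    set a := Tnat n 0 with ha
    set b := Tnat n 1 with hb
    have main : (a + 1) * (b * (a + 1) * b) = (b * (a + 1) * b) * (a + 1) := by
      have h1' : a * b * a * b - b * a * b * a = (q - 1) • (b * a) - (q - 1) • (a * b) := by
        rw [r1, r2]; simp only [smul_add]; abel
      have h2' : a * (b * b) - b * b * a = (q - 1) • (a * b) - (q - 1) • (b * a) := by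
        rw [r3]
        simp only [mul_add, add_mul, mul_smul_comm, smul_mul_assoc, mul_one, one_mul]
        abel
      have eL : (a + 1) * (b * (a + 1) * b) = a * b * a * b + a * (b * b) + b * a * b + b * b := by
        noncomm_ring
      have eR : (b * (a + 1) * b) * (a + 1) = b * a * b * a + b * b * a + b * a * b + b * b := by
        noncomm_ring
      rw [eL, eR, sub_eq_iff_eq_add.mp h1', sub_eq_iff_eq_add.mp h2']
      abel
    have he : eElt n = q⁻¹ • (a + 1) := rfl
    have hTeT : b * eElt n * b = q⁻¹ • (b * (a + 1) * b) := by
      rw [he, mul_smul_comm, smul_mul_assoc]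
    rw [hTeT, he]
    exact Commute.smul_left (Commute.smul_right main _) _
  · have hz : Tnat n 1 = 0 := Tnat_eq_zero n (by omega)
    rw [hz, zero_mul, mul_zero]
    exact Commute.zero_right _

lemma Ecom : ∀ m : ℕ, Commute (eElt n) (Ddesc n m * eElt n * Aasc n m) := by
  intro m
  induction m with
  | zero =>
      rw [Ddesc_zero, Aasc_zero, one_mul, mul_one]
  | succ k ih =>
      cases k with
      | zero =>
          rw [Ddesc_succ, Ddesc_zero, Aasc_succ, Aasc_zero, mul_one, one_mul]
          exact key_eT1eT1 n
      | succ j =>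
          have ht : Commute (eElt n) (Tnat n (j + 1 + 1)) := e_comm_T n (by omega)
          have heq : Ddesc n (j + 1 + 1) * eElt n * Aasc n (j + 1 + 1) =
              Tnat n (j + 1 + 1) * (Ddesc n (j + 1) * eElt n * Aasc n (j + 1)) *
                Tnat n (j + 1 + 1) := by
            rw [Ddesc_succ, Aasc_succ]; simp only [mul_assoc]
          rw [heq]
          exact (ht.mul_right ih).mul_right ht

end Aux

section Stmt14

local notation "K" => RatFunc ℂ

/-- In `ℛ_n`, the Jucys–Murphy element `L_n` commutes with `e` and with
`T_i` for `1 ≤ i ≤ n−2`; consequently it commutes with every element of the subalgebra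
generated by `e, T_1, …, T_{n−2}` (the image of `ℛ_{n−1}`). -/
theorem jucysMurphy_last_commutes (n : ℕ) :
    Commute (JM n n) (eElt n) ∧
    (∀ i : ℕ, 1 ≤ i → i ≤ n - 2 → Commute (JM n n) (Tnat n i)) ∧
    (∀ x ∈ Algebra.adjoin K ({eElt n} ∪ {y | ∃ i : ℕ, 1 ≤ i ∧ i ≤ n - 2 ∧ y = Tnat n i}),
      Commute (JM n n) x) := by
  have hJM : JM n n = ((RatFunc.X : RatFunc ℂ) ^ (1 - (n : ℤ))) •
      (Ddesc n (n - 1) * eElt n * Aasc n (n - 1)) := by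
    rw [JM, Ddesc_eq, Aasc_eq]
  have core_e : Commute (Ddesc n (n - 1) * eElt n * Aasc n (n - 1)) (eElt n) :=
    (Ecom n (n - 1)).symm
  have core_T : ∀ i : ℕ, 1 ≤ i → i ≤ n - 2 →
      Commute (Ddesc n (n - 1) * eElt n * Aasc n (n - 1)) (Tnat n i) := by
    intro i h1 h2
    have hn3 : 3 ≤ n := by omega
    have hi1 : i + 1 ≤ n - 1 := by omega
    show Ddesc n (n - 1) * eElt n * Aasc n (n - 1) * Tnat n i =
      Tnat n i * (Ddesc n (n - 1) * eElt n * Aasc n (n - 1))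
    rw [mul_assoc (Ddesc n (n - 1) * eElt n) (Aasc n (n - 1)) (Tnat n i),
      shiftA n (n - 1) i h1 hi1,
      ← mul_assoc (Ddesc n (n - 1) * eElt n) (Tnat n (i + 1)) (Aasc n (n - 1)),
      mul_assoc (Ddesc n (n - 1)) (eElt n) (Tnat n (i + 1)),
      (e_comm_T n (show 2 ≤ i + 1 by omega)).eq,
      ← mul_assoc (Ddesc n (n - 1)) (Tnat n (i + 1)) (eElt n),
      ← shiftD n (n - 1) i h1 hi1]
    simp only [mul_assoc]
  refine ⟨?_, ?_, ?_⟩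
  · rw [hJM]; exact core_e.smul_left _
  · intro i h1 h2; rw [hJM]; exact (core_T i h1 h2).smul_left _
  · intro x hx
    refine Algebra.adjoin_induction ?_ ?_ ?_ ?_ hx
    · rintro y (rfl | ⟨i, h1, h2, rfl⟩)
      · rw [hJM]; exact core_e.smul_left _
      · rw [hJM]; exact (core_T i h1 h2).smul_left _
    · intro r; exact (Algebra.commutes r (JM n n)).symm
    · intro u v _ _ hu hv; exact hu.add_right hv
    · intro u v _ _ hu hv; exact hu.mul_right hv

end Stmt14
end
end
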